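/- For every μ ∈ [−2938/95, 10], the point B₂(μ) = ((62+μ)/(86+μ), −3(6+μ)/(2(86+μ)), 1) satisfies f_μ(B₂(μ)) = 0, and B₂(μ) ∈ [0,1]³ if and only if μ ≤ −6. -/
import Mathlib


/-- The polymatrix replicator vector field `f_μ` on `ℝ³ = ℝ × ℝ × ℝ`. -/
noncomputable def f (μ : ℝ) (p : ℝ × ℝ × ℝ) : ℝ × ℝ × ℝ :=
  (p.1 * (1 - p.1) * (12 - μ + (μ - 14) * p.1 - 20 * p.2.1 - 4 * p.2.2),
   p.2.1 * (1 - p.2.1) * (-10 + 20 * p.1 + 4 * p.2.1 - 4 * p.2.2),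
   p.2.2 * (1 - p.2.2) * (27 - 54 * p.1 + 11 * p.2.1 - 4 * p.2.2))

/-- The cube `[0,1]³`. -/
def cube : Set (ℝ × ℝ × ℝ) :=
  {p | p.1 ∈ Set.Icc (0 : ℝ) 1 ∧ p.2.1 ∈ Set.Icc (0 : ℝ) 1 ∧ p.2.2 ∈ Set.Icc (0 : ℝ) 1}

/-- `B₂(μ) = ((62+μ)/(86+μ), −3(6+μ)/(2(86+μ)), 1)` is an equilibrium of
`f_μ`, and it lies in the cube `[0,1]³` if and only if `μ ≤ −6`. -/
theorem B2_equilibrium (μ : ℝ) (hμ : μ ∈ Set.Icc (-2938 / 95 : ℝ) 10) :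
    f μ ((62 + μ) / (86 + μ), -3 * (6 + μ) / (2 * (86 + μ)), 1) = (0, 0, 0) ∧
    (((62 + μ) / (86 + μ), -3 * (6 + μ) / (2 * (86 + μ)), (1 : ℝ)) ∈ cube ↔
      μ ≤ -6) := by
  obtain ⟨h1, h2⟩ := hμ
  have h86 : (0:ℝ) < 86 + μ := by linarith
  have h86' : (86:ℝ) + μ ≠ 0 := ne_of_gt h86
  constructor
  · unfold f
    simp only [Prod.mk.injEq]
    refine ⟨?_, ?_, by ring⟩
    · field_simp
      ring
    · field_simp
      ring
  · simp only [cube, Set.mem_setOf_eq, Set.mem_Icc]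
    constructor
    · rintro ⟨hx, hy, hz⟩
      have := hy.1
      rw [le_div_iff₀ (by linarith : (0:ℝ) < 2 * (86 + μ))] at this
      linarith
    · intro h6
      refine ⟨⟨?_, ?_⟩, ⟨?_, ?_⟩, by norm_num, le_refl 1⟩
      · exact div_nonneg (by linarith) (le_of_lt h86)
      · rw [div_le_one h86]; linarith
      · exact div_nonneg (by linarith) (by linarith)
      · rw [div_le_one (by linarith : (0:ℝ) < 2 * (86 + μ))]; linarith
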